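/- Every matrix C ∈ Θ_{m,n}, written in block form C = [C_{ij}]_{i,j=1}^m with n×n blocks, has the form C_{ij} = a_{ij} D_{ij} where each D_{ij} is doubly stochastic and A = [a_{ij}] is an m×m doubly stochastic matrix. Moreover, the extreme points of Θ_{m,n} are exactly the matrices of this form with A a permutation matrix and each D_{ij} a permutation matrix. -/

import Mathlib

open Matrix Kronecker Finset

/-- `Θ_{m,n}`: nonnegative matrices (indexed by pairs) that are doubly stochastic and
each of whose `n × n` blocks has all row sums and column sums equal to a common value. -/
def Theta (m n : ℕ) : Set (Matrix (Fin m × Fin n) (Fin m × Fin n) ℝ) :=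
  {C | (∀ p q, 0 ≤ C p q) ∧
    (∀ p, ∑ q, C p q = 1) ∧ (∀ p, ∑ q, C q p = 1) ∧
    (∀ i j : Fin m, ∃ a : ℝ,
      (∀ k : Fin n, ∑ l, C (i, k) (j, l) = a) ∧ (∀ l : Fin n, ∑ k, C (i, k) (j, l) = a))}

private lemma construct_mem_theta {m n : ℕ} {B : Matrix (Fin m) (Fin m) ℝ}
    (hB : B ∈ doublyStochastic ℝ (Fin m))
    {E : Fin m → Fin m → Matrix (Fin n) (Fin n) ℝ}
    (hE : ∀ i j, E i j ∈ doublyStochastic ℝ (Fin n))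
    {C : Matrix (Fin m × Fin n) (Fin m × Fin n) ℝ}
    (hC : ∀ i j k l, C (i, k) (j, l) = B i j * E i j k l) :
    C ∈ Theta m n := by
  refine ⟨?_, ?_, ?_, ?_⟩
  · rintro ⟨i, k⟩ ⟨j, l⟩
    rw [hC]
    exact mul_nonneg (nonneg_of_mem_doublyStochastic hB)
      (nonneg_of_mem_doublyStochastic (hE i j))
  · rintro ⟨i, k⟩
    rw [Fintype.sum_prod_type]
    calc ∑ j, ∑ l, C (i, k) (j, l) = ∑ j, B i j := by
          refine Finset.sum_congr rfl fun j _ => ?_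
          simp_rw [hC, ← mul_sum, sum_row_of_mem_doublyStochastic (hE i j) k, mul_one]
      _ = 1 := sum_row_of_mem_doublyStochastic hB i
  · rintro ⟨j, l⟩
    rw [Fintype.sum_prod_type]
    calc ∑ i, ∑ k, C (i, k) (j, l) = ∑ i, B i j := by
          refine Finset.sum_congr rfl fun i _ => ?_
          simp_rw [hC, ← mul_sum, sum_col_of_mem_doublyStochastic (hE i j) l, mul_one]
      _ = 1 := sum_col_of_mem_doublyStochastic hB j
  · intro i j
    exact ⟨B i j,
      fun k => by simp_rw [hC, ← mul_sum, sum_row_of_mem_doublyStochastic (hE i j) k, mul_one],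
      fun l => by simp_rw [hC, ← mul_sum, sum_col_of_mem_doublyStochastic (hE i j) l, mul_one]⟩

private lemma theta_decomp {m n : ℕ} (hn : 0 < n)
    (C : Matrix (Fin m × Fin n) (Fin m × Fin n) ℝ) (hC : C ∈ Theta m n) :
    ∃ A ∈ doublyStochastic ℝ (Fin m), ∃ D : Fin m → Fin m → Matrix (Fin n) (Fin n) ℝ,
      (∀ i j, D i j ∈ doublyStochastic ℝ (Fin n)) ∧
      ∀ i j k l, C (i, k) (j, l) = A i j * D i j k l := by
  obtain ⟨hpos, hrow, hcol, hblock⟩ := hC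
  choose a ha₁ ha₂ using hblock
  have k₀ : Fin n := ⟨0, hn⟩
  have hanneg : ∀ i j, 0 ≤ a i j := fun i j => by
    rw [← ha₁ i j k₀]; exact sum_nonneg fun l _ => hpos _ _
  have hCle : ∀ i j k l, C (i, k) (j, l) ≤ a i j := fun i j k l => by
    rw [← ha₁ i j k]
    exact single_le_sum (fun l' _ => hpos _ _) (mem_univ l)
  refine ⟨Matrix.of a, ?_, fun i j => if h : a i j = 0 then 1
      else Matrix.of fun k l => (a i j)⁻¹ * C (i, k) (j, l), fun i j => ?_, fun i j k l => ?_⟩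
  · rw [mem_doublyStochastic_iff_sum]
    refine ⟨fun i j => hanneg i j, fun i => ?_, fun j => ?_⟩
    · have h := hrow (i, k₀)
      rw [Fintype.sum_prod_type] at h
      calc ∑ j, Matrix.of a i j = ∑ j, ∑ l, C (i, k₀) (j, l) := by
            refine sum_congr rfl fun j _ => ?_
            rw [ha₁ i j k₀]; rfl
        _ = 1 := h
    · have h := hcol (j, k₀)
      rw [Fintype.sum_prod_type] at h
      calc ∑ i, Matrix.of a i j = ∑ i, ∑ k, C (i, k) (j, k₀) := by
            refine sum_congr rfl fun i _ => ?_
            rw [ha₂ i j k₀]; rfl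
        _ = 1 := h
  · dsimp only
    by_cases h : a i j = 0
    · rw [dif_pos h]; exact one_mem _
    · rw [dif_neg h, mem_doublyStochastic_iff_sum]
      refine ⟨fun k l => mul_nonneg (inv_nonneg.2 (hanneg i j)) (hpos _ _), fun k => ?_,
        fun l => ?_⟩
      · simp_rw [Matrix.of_apply]
        rw [← mul_sum, ha₁ i j k, inv_mul_cancel₀ h]
      · simp_rw [Matrix.of_apply]
        rw [← mul_sum, ha₂ i j l, inv_mul_cancel₀ h]
  · dsimp only
    by_cases h : a i j = 0
    · rw [dif_pos h]
      have hz : C (i, k) (j, l) = 0 := le_antisymm (h ▸ hCle i j k l) (hpos _ _)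
      rw [hz, Matrix.of_apply, h, zero_mul]
    · rw [dif_neg h, Matrix.of_apply, Matrix.of_apply, ← mul_assoc, mul_inv_cancel₀ h, one_mul]

private lemma perm_of_extreme {N : ℕ} {M : Matrix (Fin N) (Fin N) ℝ}
    (hM : M ∈ Set.extremePoints ℝ (doublyStochastic ℝ (Fin N) : Set _)) :
    ∃ σ : Equiv.Perm (Fin N), M = σ.permMatrix ℝ := by
  rw [show (doublyStochastic ℝ (Fin N) : Set _) =
      convexHull ℝ {σ.permMatrix ℝ | σ : Equiv.Perm (Fin N)} from
      doublyStochastic_eq_convexHull_permMatrix] at hM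
  obtain ⟨σ, hσ⟩ := extremePoints_convexHull_subset hM
  exact ⟨σ, hσ.symm⟩

private lemma permMatrix_zero_or_one {N : ℕ} (ρ : Equiv.Perm (Fin N)) (x y : Fin N) :
    (ρ.permMatrix ℝ) x y = 0 ∨ (ρ.permMatrix ℝ) x y = 1 := by
  rw [Equiv.Perm.permMatrix, PEquiv.toMatrix_apply]
  split
  · right; rfl
  · left; rfl

private lemma eq_of_comb {m n : ℕ} {C X Y : Matrix (Fin m × Fin n) (Fin m × Fin n) ℝ}
    (hC01 : ∀ p q, C p q = 0 ∨ C p q = 1)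
    (hX : X ∈ Theta m n) (hY : Y ∈ Theta m n) {a b : ℝ} (ha : 0 < a) (hb : 0 < b)
    (hab : a + b = 1) (heq : a • X + b • Y = C) : X = C := by
  ext p q
  have hXn := hX.1 p q
  have hYn := hY.1 p q
  have hX1 : X p q ≤ 1 := by
    rw [← hX.2.1 p]; exact single_le_sum (fun r _ => hX.1 p r) (mem_univ q)
  have hY1 : Y p q ≤ 1 := by
    rw [← hY.2.1 p]; exact single_le_sum (fun r _ => hY.1 p r) (mem_univ q)
  have he : a * X p q + b * Y p q = C p q := by
    have := congrFun (congrFun heq p) q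
    simpa using this
  rcases hC01 p q with h | h <;> rw [h] <;> rw [h] at he
  · have h1 : a * X p q = 0 := by
      have := mul_nonneg ha.le hXn
      have := mul_nonneg hb.le hYn
      linarith
    exact (mul_eq_zero.1 h1).resolve_left (ne_of_gt ha)
  · have h1 : a * (1 - X p q) = 0 := by
      have := mul_nonneg ha.le (by linarith : (0:ℝ) ≤ 1 - X p q)
      have := mul_nonneg hb.le (by linarith : (0:ℝ) ≤ 1 - Y p q)
      nlinarith
    have := (mul_eq_zero.1 h1).resolve_left (ne_of_gt ha)
    linarith

private lemma perm_mem_extreme {m n : ℕ} (σ : Equiv.Perm (Fin m))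
    (τ : Fin m → Fin m → Equiv.Perm (Fin n))
    (C : Matrix (Fin m × Fin n) (Fin m × Fin n) ℝ)
    (hC : ∀ i j k l, C (i, k) (j, l) = (σ.permMatrix ℝ) i j * ((τ i j).permMatrix ℝ) k l) :
    C ∈ Set.extremePoints ℝ (Theta m n) := by
  have hCΘ : C ∈ Theta m n :=
    construct_mem_theta permMatrix_mem_doublyStochastic
      (fun i j => permMatrix_mem_doublyStochastic) hC
  have hC01 : ∀ p q, C p q = 0 ∨ C p q = 1 := by
    rintro ⟨i, k⟩ ⟨j, l⟩
    rcases permMatrix_zero_or_one σ i j with h | h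
    · left; rw [hC, h, zero_mul]
    rcases permMatrix_zero_or_one (τ i j) k l with h' | h'
    · left; rw [hC, h', mul_zero]
    · right; rw [hC, h, h', one_mul]
  rw [mem_extremePoints]
  refine ⟨hCΘ, fun X hX Y hY hseg => ?_⟩
  obtain ⟨a, b, ha, hb, hab, heq⟩ := hseg
  exact ⟨eq_of_comb hC01 hX hY ha hb hab heq,
    eq_of_comb hC01 hY hX hb ha (by linarith) (by rw [add_comm]; exact heq)⟩

theorem theta_structure (m n : ℕ) :
    (∀ C ∈ Theta m n, ∃ A ∈ doublyStochastic ℝ (Fin m),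
      ∃ D : Fin m → Fin m → Matrix (Fin n) (Fin n) ℝ,
        (∀ i j, D i j ∈ doublyStochastic ℝ (Fin n)) ∧
        (∀ i j k l, C (i, k) (j, l) = A i j * D i j k l)) ∧
    Set.extremePoints ℝ (Theta m n) =
      {C | ∃ σ : Equiv.Perm (Fin m), ∃ τ : Fin m → Fin m → Equiv.Perm (Fin n),
        ∀ i j k l, C (i, k) (j, l) = (σ.permMatrix ℝ) i j * ((τ i j).permMatrix ℝ) k l} := by
  constructor
  · intro C hC
    rcases Nat.eq_zero_or_pos n with hn | hn
    · subst hn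
      exact ⟨1, one_mem _, fun _ _ => 1, fun _ _ => one_mem _, fun i j k l => k.elim0⟩
    · exact theta_decomp hn C hC
  · ext C
    constructor
    · intro hCext
      obtain ⟨hCΘ, hext⟩ := mem_extremePoints.1 hCext
      rcases Nat.eq_zero_or_pos n with hn | hn
      · subst hn
        exact ⟨1, fun _ _ => 1, fun i j k l => k.elim0⟩
      obtain ⟨A, hA, D, hD, hCD⟩ := theta_decomp hn C hCΘ
      have k₀ : Fin n := ⟨0, hn⟩
      have hrec : ∀ (B : Matrix (Fin m) (Fin m) ℝ)
          (CB : Matrix (Fin m × Fin n) (Fin m × Fin n) ℝ),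
          (∀ i j k l, CB (i, k) (j, l) = B i j * D i j k l) →
          ∀ i j, ∑ l, CB (i, k₀) (j, l) = B i j := by
        intro B CB hCB i j
        simp_rw [hCB, ← mul_sum, sum_row_of_mem_doublyStochastic (hD i j) k₀, mul_one]
      have hAext : A ∈ Set.extremePoints ℝ (doublyStochastic ℝ (Fin m) : Set _) := by
        rw [mem_extremePoints]
        refine ⟨hA, fun B₁ hB₁ B₂ hB₂ hseg => ?_⟩
        obtain ⟨a, b, ha, hb, hab, heq⟩ := hseg
        set C₁ : Matrix (Fin m × Fin n) (Fin m × Fin n) ℝ :=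
          Matrix.of fun p q => B₁ p.1 q.1 * D p.1 q.1 p.2 q.2 with hC₁def
        set C₂ : Matrix (Fin m × Fin n) (Fin m × Fin n) ℝ :=
          Matrix.of fun p q => B₂ p.1 q.1 * D p.1 q.1 p.2 q.2 with hC₂def
        have hC₁Θ : C₁ ∈ Theta m n := construct_mem_theta hB₁ hD (fun i j k l => rfl)
        have hC₂Θ : C₂ ∈ Theta m n := construct_mem_theta hB₂ hD (fun i j k l => rfl)
        have hcomb : a • C₁ + b • C₂ = C := by
          ext ⟨i, k⟩ ⟨j, l⟩
          have hAij : A i j = a * B₁ i j + b * B₂ i j := by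
            rw [← heq]; simp [Matrix.add_apply, Matrix.smul_apply, smul_eq_mul]
          simp only [Matrix.add_apply, Matrix.smul_apply, smul_eq_mul, Matrix.of_apply,
            hCD, hAij, hC₁def, hC₂def]
          ring
        obtain ⟨h1, h2⟩ := hext C₁ hC₁Θ C₂ hC₂Θ ⟨a, b, ha, hb, hab, hcomb⟩
        constructor
        · ext i j
          rw [← hrec B₁ C₁ (fun _ _ _ _ => rfl) i j, h1, hrec A C hCD i j]
        · ext i j
          rw [← hrec B₂ C₂ (fun _ _ _ _ => rfl) i j, h2, hrec A C hCD i j]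
      obtain ⟨σ, hσ⟩ := perm_of_extreme hAext
      have hτ : ∀ i j, ∃ τ : Equiv.Perm (Fin n), A i j ≠ 0 → D i j = τ.permMatrix ℝ := by
        intro i j
        by_cases hAij : A i j = 0
        · exact ⟨1, fun h => absurd hAij h⟩
        have hDext : D i j ∈ Set.extremePoints ℝ (doublyStochastic ℝ (Fin n) : Set _) := by
          rw [mem_extremePoints]
          refine ⟨hD i j, fun E₁ hE₁ E₂ hE₂ hseg => ?_⟩
          obtain ⟨a, b, ha, hb, hab, heq⟩ := hseg
          set D₁ : Fin m → Fin m → Matrix (Fin n) (Fin n) ℝ :=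
            fun i' j' => if i' = i ∧ j' = j then E₁ else D i' j' with hD₁def
          set D₂ : Fin m → Fin m → Matrix (Fin n) (Fin n) ℝ :=
            fun i' j' => if i' = i ∧ j' = j then E₂ else D i' j' with hD₂def
          have hD₁mem : ∀ i' j', D₁ i' j' ∈ doublyStochastic ℝ (Fin n) := by
            intro i' j'
            rw [hD₁def]
            dsimp only
            split
            · exact hE₁
            · exact hD i' j'
          have hD₂mem : ∀ i' j', D₂ i' j' ∈ doublyStochastic ℝ (Fin n) := by
            intro i' j'
            rw [hD₂def]
            dsimp only
            split
            · exact hE₂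
            · exact hD i' j'
          set C₁ : Matrix (Fin m × Fin n) (Fin m × Fin n) ℝ :=
            Matrix.of fun p q => A p.1 q.1 * D₁ p.1 q.1 p.2 q.2 with hC₁def
          set C₂ : Matrix (Fin m × Fin n) (Fin m × Fin n) ℝ :=
            Matrix.of fun p q => A p.1 q.1 * D₂ p.1 q.1 p.2 q.2 with hC₂def
          have hC₁Θ : C₁ ∈ Theta m n := construct_mem_theta hA hD₁mem (fun i j k l => rfl)
          have hC₂Θ : C₂ ∈ Theta m n := construct_mem_theta hA hD₂mem (fun i j k l => rfl)
          have hcomb : a • C₁ + b • C₂ = C := by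
            ext ⟨i', k⟩ ⟨j', l⟩
            simp only [Matrix.add_apply, Matrix.smul_apply, smul_eq_mul, Matrix.of_apply,
              hCD, hC₁def, hC₂def, hD₁def, hD₂def]
            by_cases hij : i' = i ∧ j' = j
            · obtain ⟨rfl, rfl⟩ := hij
              rw [if_pos ⟨rfl, rfl⟩, if_pos ⟨rfl, rfl⟩]
              have hDij : a * E₁ k l + b * E₂ k l = D i' j' k l := by
                have := congrFun (congrFun heq k) l
                simpa using this
              rw [← hDij]; ring
            · rw [if_neg hij, if_neg hij, ← add_mul, hab, one_mul]
          obtain ⟨h1, h2⟩ := hext C₁ hC₁Θ C₂ hC₂Θ ⟨a, b, ha, hb, hab, hcomb⟩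
          constructor
          · ext k l
            have := congrFun (congrFun h1 (i, k)) (j, l)
            simp only [hC₁def, Matrix.of_apply, hD₁def] at this
            simp only [and_self, if_true] at this
            rw [hCD] at this
            exact mul_left_cancel₀ hAij this
          · ext k l
            have := congrFun (congrFun h2 (i, k)) (j, l)
            simp only [hC₂def, Matrix.of_apply, hD₂def] at this
            simp only [and_self, if_true] at this
            rw [hCD] at this
            exact mul_left_cancel₀ hAij this
        obtain ⟨τ0, hτ0⟩ := perm_of_extreme hDext
        exact ⟨τ0, fun _ => hτ0⟩
      choose τ hτ using hτ
      refine ⟨σ, τ, fun i j k l => ?_⟩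
      rw [hCD, ← hσ]
      by_cases hAij : A i j = 0
      · rw [hAij, zero_mul, zero_mul]
      · rw [hτ i j hAij]
    · rintro ⟨σ, τ, hC⟩
      exact perm_mem_extreme σ τ C hC
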